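/- Let m > 0 be a real number and define G_m(r) = 2m ∫_r^1 (∫_t^1 (sinh s / sinh t)^m ds) dt for r ∈ (0,1]. Then for every r ∈ (0,1) and every real number a with a ≤ m·coth(r), one has G_m''(r) + a·G_m'(r) ≥ 2m. -/

import Mathlib

open Real MeasureTheory intervalIntegral Set

noncomputable def gapHf (m t : ℝ) : ℝ := ∫ s in t..1, Real.sinh s ^ m

noncomputable def gapFf (m t : ℝ) : ℝ := Real.sinh t ^ (-m) * gapHf m t

lemma gap_sinh_rpow_contOn (m : ℝ) :
    ContinuousOn (fun s : ℝ => Real.sinh s ^ m) (Set.Ioi 0) := by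
  intro s hs
  have h : Real.sinh s ≠ 0 := ne_of_gt (Real.sinh_pos_iff.2 hs)
  exact ((Real.continuousAt_rpow_const _ m (Or.inl h)).comp
    Real.continuous_sinh.continuousAt).continuousWithinAt

lemma gap_uIcc_subset {t : ℝ} (ht : 0 < t) : Set.uIcc t 1 ⊆ Set.Ioi 0 := by
  intro s hs
  have := hs.1
  have hmin : 0 < min t 1 := lt_min ht one_pos
  exact lt_of_lt_of_le hmin this

lemma gapHf_hasDeriv (m : ℝ) {t : ℝ} (ht : 0 < t) :
    HasDerivAt (gapHf m) (-(Real.sinh t ^ m)) t := by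
  apply intervalIntegral.integral_hasDerivAt_left
  · exact ((gap_sinh_rpow_contOn m).mono (gap_uIcc_subset ht)).intervalIntegrable
  · exact (gap_sinh_rpow_contOn m).stronglyMeasurableAtFilter isOpen_Ioi t ht
  · exact ((gap_sinh_rpow_contOn m) t ht).continuousAt (Ioi_mem_nhds ht)

lemma gapFf_hasDeriv (m : ℝ) {t : ℝ} (ht : 0 < t) :
    HasDerivAt (gapFf m) (-(m * (Real.cosh t / Real.sinh t)) * gapFf m t - 1) t := by
  have hst : 0 < Real.sinh t := Real.sinh_pos_iff.2 ht
  have h1 : HasDerivAt (fun u : ℝ => Real.sinh u ^ (-m))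
      (((-m) * Real.sinh t ^ (-m - 1)) * Real.cosh t) t :=
    (Real.hasDerivAt_rpow_const (p := -m) (Or.inl hst.ne')).comp t (Real.hasDerivAt_sinh t)
  have h2 := gapHf_hasDeriv m ht
  have h3 := h1.mul h2
  have key : (((-m) * Real.sinh t ^ (-m - 1)) * Real.cosh t) * gapHf m t
      + Real.sinh t ^ (-m) * (-(Real.sinh t ^ m))
      = -(m * (Real.cosh t / Real.sinh t)) * gapFf m t - 1 := by
    have e1 : Real.sinh t ^ (-m) * Real.sinh t ^ m = 1 := by
      rw [← Real.rpow_add hst]; simp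
    have e2 : Real.sinh t ^ (-m - 1) = Real.sinh t ^ (-m) / Real.sinh t := by
      rw [Real.rpow_sub hst, Real.rpow_one]
    rw [e2]
    unfold gapFf
    field_simp
    nlinarith [e1]
  rw [← key]
  exact h3

lemma gap_inner_eq (m : ℝ) {t : ℝ} (ht : 0 < t) :
    (∫ s in t..(1:ℝ), (Real.sinh s / Real.sinh t) ^ m) = gapFf m t := by
  have hst : 0 < Real.sinh t := Real.sinh_pos_iff.2 ht
  unfold gapFf gapHf
  rw [← intervalIntegral.integral_const_mul]
  apply intervalIntegral.integral_congr
  intro s hs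
  have hs0 : 0 < s := gap_uIcc_subset ht hs
  have hss : 0 < Real.sinh s := Real.sinh_pos_iff.2 hs0
  simp only []
  rw [Real.div_rpow hss.le hst.le, Real.rpow_neg hst.le]
  ring

lemma gapFf_contOn (m : ℝ) : ContinuousOn (gapFf m) (Set.Ioi 0) := fun t ht =>
  ((gapFf_hasDeriv m ht).continuousAt).continuousWithinAt

lemma gap_derivG (m : ℝ) (G : ℝ → ℝ)
    (hG : ∀ r : ℝ, G r =
      2 * m * ∫ t in r..(1 : ℝ), ∫ s in t..(1 : ℝ), (Real.sinh s / Real.sinh t) ^ m)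
    {x : ℝ} (hx : x ∈ Set.Ioo (0:ℝ) 1) :
    HasDerivAt G (-(2 * m) * gapFf m x) x := by
  have hGeq : ∀ y ∈ Set.Ioo (0:ℝ) 1, G y = 2 * m * ∫ t in y..(1:ℝ), gapFf m t := by
    intro y hy
    rw [hG y]
    congr 1
    apply intervalIntegral.integral_congr
    intro t ht
    have ht0 : 0 < t := lt_of_lt_of_le (lt_min hy.1 one_pos) ht.1
    exact gap_inner_eq m ht0
  have hint : HasDerivAt (fun y => ∫ t in y..(1:ℝ), gapFf m t) (-(gapFf m x)) x := by
    apply intervalIntegral.integral_hasDerivAt_left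
    · exact ((gapFf_contOn m).mono (gap_uIcc_subset hx.1)).intervalIntegrable
    · exact (gapFf_contOn m).stronglyMeasurableAtFilter isOpen_Ioi x hx.1
    · exact ((gapFf_contOn m) x hx.1).continuousAt (Ioi_mem_nhds hx.1)
  have h2 : HasDerivAt (fun y => 2 * m * ∫ t in y..(1:ℝ), gapFf m t)
      (2 * m * -(gapFf m x)) x := hint.const_mul (2 * m)
  have heq : G =ᶠ[nhds x] fun y => 2 * m * ∫ t in y..(1:ℝ), gapFf m t :=
    Filter.eventuallyEq_of_mem (isOpen_Ioo.mem_nhds hx) hGeq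
  have := h2.congr_of_eventuallyEq heq
  rw [show -(2 * m) * gapFf m x = 2 * m * -gapFf m x by ring]
  exact this

/-- For `m > 0` and the comparison function
`G_m(r) = 2m ∫_r^1 (∫_t^1 (sinh s / sinh t)^m ds) dt`, for every `r ∈ (0,1)` and every real
`a ≤ m coth r` one has `G_m''(r) + a G_m'(r) ≥ 2m`. -/
theorem gap_G_barrier_inequality (m : ℝ) (hm : 0 < m) (G : ℝ → ℝ)
    (hG : ∀ r : ℝ, G r =
      2 * m * ∫ t in r..(1 : ℝ), ∫ s in t..(1 : ℝ), (Real.sinh s / Real.sinh t) ^ m) :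
    ∀ r ∈ Set.Ioo (0 : ℝ) 1, ∀ a : ℝ, a ≤ m * (Real.cosh r / Real.sinh r) →
      2 * m ≤ deriv (deriv G) r + a * deriv G r := by
  intro r hr a ha
  have hG' : deriv G =ᶠ[nhds r] fun x => -(2 * m) * gapFf m x :=
    Filter.eventuallyEq_of_mem (isOpen_Ioo.mem_nhds hr)
      (fun x hx => (gap_derivG m G hG hx).deriv)
  have hd1 : deriv G r = -(2 * m) * gapFf m r := (gap_derivG m G hG hr).deriv
  have hd2 : deriv (deriv G) r
      = -(2 * m) * (-(m * (Real.cosh r / Real.sinh r)) * gapFf m r - 1) := by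
    have h := ((gapFf_hasDeriv m hr.1).const_mul (-(2 * m)))
    rw [Filter.EventuallyEq.deriv_eq hG']
    exact h.deriv
  have hFnn : 0 ≤ gapFf m r := by
    unfold gapFf
    apply mul_nonneg (Real.rpow_nonneg (Real.sinh_pos_iff.2 hr.1).le _)
    unfold gapHf
    apply intervalIntegral.integral_nonneg hr.2.le
    intro s hs
    exact Real.rpow_nonneg (Real.sinh_nonneg_iff.2 (le_trans hr.1.le hs.1)) _
  rw [hd1, hd2]
  nlinarith [mul_nonneg (sub_nonneg.2 ha) hFnn]
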